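/- Let I ⊂ S be a monomial ideal. If S/I admits a pretty clean filtration F, then Supp(F) = Ass(S/I); in particular, if Ass(S/I^m) = Min(I^m) and S/I^m has a prime filtration all of whose quotients' primes are not all minimal, then S/I^m is not pretty clean. -/

import Mathlib

open MvPolynomial

/-! ### Simplicial complexes, matroids -/

section Complexes

variable {α : Type*}

/-- A simplicial complex: a nonempty collection of finite subsets closed under subsets. -/
def IsSimplicialComplex (Δ : Set (Finset α)) : Prop :=
  Δ.Nonempty ∧ ∀ F ∈ Δ, ∀ G ⊆ F, G ∈ Δ

/-- The facets (maximal faces) of a complex. -/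
def facets (Δ : Set (Finset α)) : Set (Finset α) :=
  {F | F ∈ Δ ∧ ∀ G ∈ Δ, F ⊆ G → F = G}

/-- A complex is pure if all facets have the same cardinality. -/
def IsPure (Δ : Set (Finset α)) : Prop :=
  ∀ F ∈ facets Δ, ∀ G ∈ facets Δ, F.card = G.card

/-- A matroid: a simplicial complex with the augmentation exchange property. -/
def IsMatroidComplex [DecidableEq α] (Δ : Set (Finset α)) : Prop :=
  IsSimplicialComplex Δ ∧
    ∀ F ∈ Δ, ∀ G ∈ Δ, F.card < G.card → ∃ i ∈ G \ F, insert i F ∈ Δ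

/-- The complement complex `Δᶜ`, generated by the complements of the facets of `Δ`. -/
def complementComplex {n : ℕ} (Δ : Set (Finset (Fin n))) : Set (Finset (Fin n)) :=
  {G | ∃ F ∈ facets Δ, G ⊆ Fᶜ}

end Complexes

/-! ### Stanley-Reisner ideals and symbolic powers -/

section SR

variable (k : Type*) [Field k] {n : ℕ}

/-- The monomial prime `P_F = (x_i : i ∈ F)`. -/
noncomputable def varIdeal (F : Finset (Fin n)) : Ideal (MvPolynomial (Fin n) k) :=
  Ideal.span ((fun i => (X i : MvPolynomial (Fin n) k)) '' ↑F)

/-- The Stanley-Reisner ideal of a complex. -/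
noncomputable def SRIdeal (Δ : Set (Finset (Fin n))) : Ideal (MvPolynomial (Fin n) k) :=
  Ideal.span {u | ∃ F : Finset (Fin n), F ∉ Δ ∧ u = ∏ i ∈ F, X i}

/-- The `m`-th symbolic power of the Stanley-Reisner ideal:
`I_Δ^{(m)} = ⋂_{F ∈ F(Δᶜ)} P_F^m`. -/
noncomputable def symbPowSR (Δ : Set (Finset (Fin n))) (m : ℕ) :
    Ideal (MvPolynomial (Fin n) k) :=
  ⨅ F ∈ facets (complementComplex Δ), (varIdeal k F) ^ m

variable {σ : Type*}

/-- A monomial (with coefficient 1). -/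
def IsMonomialElem (p : MvPolynomial σ k) : Prop := ∃ d, p = monomial d 1

/-- A monomial ideal: generated by monomials. -/
def IsMonomialIdeal (I : Ideal (MvPolynomial σ k)) : Prop :=
  ∃ G : Set (MvPolynomial σ k), (∀ g ∈ G, IsMonomialElem k g) ∧ I = Ideal.span G

/-- Complete intersection monomial ideal: generated by a regular sequence of monomials. -/
def IsCIMonomialIdeal (I : Ideal (MvPolynomial σ k)) : Prop :=
  ∃ rs : List (MvPolynomial σ k), (∀ x ∈ rs, IsMonomialElem k x) ∧
    RingTheory.Sequence.IsRegular (MvPolynomial σ k) rs ∧ I = Ideal.span {x | x ∈ rs}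

end SR

/-! ### Prime filtrations, clean and pretty clean -/

section Clean

variable (k : Type*) [Field k] {σ : Type*}

/-- A prime filtration `I = I₀ ⊂ I₁ ⊂ ⋯ ⊂ I_r = S` of monomial ideals with cyclic
quotients `I_i/I_{i-1} ≅ S/p_i` (realized by `I_i = I_{i-1} + (v)` and `I_{i-1} : v = p_i`). -/
structure PrimeFiltration (I : Ideal (MvPolynomial σ k)) where
  len : ℕ
  c : ℕ → Ideal (MvPolynomial σ k)
  p : ℕ → Ideal (MvPolynomial σ k)
  first : c 0 = I
  last : c len = ⊤
  strict : ∀ i < len, c i < c (i + 1)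
  monomial : ∀ i ≤ len, IsMonomialIdeal k (c i)
  prime : ∀ i < len, (p (i + 1)).IsPrime
  cyclic : ∀ i < len, ∃ v, c (i + 1) = c i ⊔ Ideal.span {v} ∧
    Submodule.colon (c i) (Ideal.span {v}) = p (i + 1)

/-- The support of a prime filtration: the set of primes `p₁, …, p_r`. -/
def PrimeFiltration.supp {I : Ideal (MvPolynomial σ k)} (F : PrimeFiltration k I) :
    Set (Ideal (MvPolynomial σ k)) :=
  {q | ∃ i < F.len, q = F.p (i + 1)}

/-- `S/I` is clean: it admits a prime filtration with support `Min(I)`. -/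
def IsCleanIdeal (I : Ideal (MvPolynomial σ k)) : Prop :=
  ∃ F : PrimeFiltration k I, F.supp = I.minimalPrimes

/-- Pretty clean filtration: `p_i ⊆ p_j` with `i < j` forces `p_i = p_j`. -/
def PrimeFiltration.IsPrettyClean {I : Ideal (MvPolynomial σ k)}
    (F : PrimeFiltration k I) : Prop :=
  ∀ i j, 0 < i → i < j → j ≤ F.len → F.p i ≤ F.p j → F.p i = F.p j

/-- `S/I` is pretty clean: it admits a pretty clean prime filtration. -/
def IsPrettyCleanIdeal (I : Ideal (MvPolynomial σ k)) : Prop :=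
  ∃ F : PrimeFiltration k I, F.IsPrettyClean

end Clean

/-! ### Dimension, depth, Cohen-Macaulayness -/

section CM

/-- Krull dimension of a module, as `dim S/ann M`. -/
noncomputable def modDim (S : Type*) [CommRing S] (M : Type*) [AddCommGroup M]
    [Module S M] : WithBot (WithTop ℕ) :=
  ringKrullDim (S ⧸ Module.annihilator S M)

variable (k : Type*) [Field k] (n : ℕ)

/-- The graded maximal ideal `(x₁, …, xₙ)`. -/
noncomputable def maxIdeal : Ideal (MvPolynomial (Fin n) k) := Ideal.span (Set.range X)

/-- A module over `k[x₁,…,xₙ]` is Cohen-Macaulay if it is trivial or admits a weakly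
regular sequence in the graded maximal ideal whose length equals its Krull dimension
(i.e. depth = dim). -/
def IsCMmod (M : Type*) [AddCommGroup M] [Module (MvPolynomial (Fin n) k) M] : Prop :=
  Subsingleton M ∨ ∃ rs : List (MvPolynomial (Fin n) k),
    (∀ x ∈ rs, x ∈ maxIdeal k n) ∧ RingTheory.Sequence.IsWeaklyRegular M rs ∧
      modDim (MvPolynomial (Fin n) k) M = (rs.length : WithBot (WithTop ℕ))

/-- `S/I` is Cohen-Macaulay. -/
def IsCMIdeal (I : Ideal (MvPolynomial (Fin n) k)) : Prop :=
  IsCMmod k n (MvPolynomial (Fin n) k ⧸ I)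

/-- The subquotient `A/B` of two ideals, as a module. -/
def subQuot {S : Type*} [CommRing S] (A B : Ideal S) :=
  A ⧸ (Submodule.comap A.subtype B)

noncomputable instance {S : Type*} [CommRing S] (A B : Ideal S) : AddCommGroup (subQuot A B) := by
  unfold subQuot; infer_instance

noncomputable instance {S : Type*} [CommRing S] (A B : Ideal S) : Module S (subQuot A B) := by
  unfold subQuot; infer_instance

/-- Sequentially Cohen-Macaulay: there is a chain of monomial ideals
`I = I₀ ⊂ ⋯ ⊂ I_r = S` with Cohen-Macaulay quotients of strictly increasing dimension. -/
def IsSeqCMIdeal (I : Ideal (MvPolynomial (Fin n) k)) : Prop :=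
  ∃ (r : ℕ) (c : ℕ → Ideal (MvPolynomial (Fin n) k)),
    c 0 = I ∧ c r = ⊤ ∧ (∀ i ≤ r, IsMonomialIdeal k (c i)) ∧
    (∀ i < r, c i < c (i + 1)) ∧
    (∀ i < r, IsCMmod k n (subQuot (c (i + 1)) (c i))) ∧
    ∀ i, i + 1 < r →
      modDim (MvPolynomial (Fin n) k) (subQuot (c (i + 1)) (c i)) <
        modDim (MvPolynomial (Fin n) k) (subQuot (c (i + 2)) (c (i + 1)))

end CM

/-! ### Graphs of 1-dimensional complexes -/

section Graphs

/-- The graph whose edges are the 2-element faces of `Δ`. -/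
def complexGraph {n : ℕ} (Δ : Set (Finset (Fin n))) : SimpleGraph (Fin n) where
  Adj u v := u ≠ v ∧ ({u, v} : Finset (Fin n)) ∈ Δ
  symm := ⟨by
    intro u v h
    exact ⟨h.1.symm, by rw [Finset.pair_comm]; exact h.2⟩⟩
  loopless := ⟨fun u h => h.1 rfl⟩

end Graphs

/-! ### Linear quotients -/

section LQ

variable (k : Type*) [Field k] {σ : Type*}

/-- A monomial ideal has linear quotients: its minimal generators can be ordered
`u₁, …, u_s` so that each colon `(u₁,…,u_{i-1}) : u_i` is generated by variables. -/
def HasLinearQuotients (J : Ideal (MvPolynomial σ k)) : Prop :=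
  ∃ L : List (MvPolynomial σ k), (∀ u ∈ L, IsMonomialElem k u) ∧
    J = Ideal.span {u | u ∈ L} ∧
    ∀ i (h : i < L.length), 0 < i → ∃ V : Set σ,
      Submodule.colon (Ideal.span {u | u ∈ L.take i}) (Ideal.span {L.get ⟨i, h⟩}) =
        Ideal.span ((fun s => (X s : MvPolynomial σ k)) '' V)

end LQ

/-! ### Symbolic powers via saturation at minimal primes -/

section Symb

variable {S : Type*} [CommRing S]

/-- The contraction of `J S_P` back to `S`: `{x | ∃ s ∉ P, s·x ∈ J}`. -/
def satAtPrime (J P : Ideal S) (hP : P.IsPrime) : Ideal S where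
  carrier := {x | ∃ s, s ∉ P ∧ s * x ∈ J}
  zero_mem' := ⟨1, fun h => hP.ne_top ((Ideal.eq_top_iff_one P).2 h), by simp⟩
  add_mem' := by
    rintro a b ⟨s, hs, hsa⟩ ⟨t, ht, htb⟩
    refine ⟨s * t, fun h => ((hP.mem_or_mem h).elim hs ht), ?_⟩
    have : s * t * (a + b) = t * (s * a) + s * (t * b) := by ring
    rw [this]
    exact Ideal.add_mem _ (Ideal.mul_mem_left _ _ hsa) (Ideal.mul_mem_left _ _ htb)
  smul_mem' := by
    rintro r a ⟨s, hs, hsa⟩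
    refine ⟨s, hs, ?_⟩
    have : s * (r • a) = r * (s * a) := by simp [smul_eq_mul]; ring
    rw [this]
    exact Ideal.mul_mem_left _ _ hsa

/-- The `m`-th symbolic power: the intersection over the minimal primes `P` of `I` of the
`P`-primary components of `I^m` (contractions of `I^m S_P`). -/
noncomputable def symbolicPower (I : Ideal S) (m : ℕ) : Ideal S :=
  sInf {J | ∃ P, ∃ h : P ∈ I.minimalPrimes, J = satAtPrime (I ^ m) P h.1.1}

end Symb

section Aux13
variable {S : Type*} [CommRing S]

lemma colon_mem_iff13 (J : Ideal S) (w t : S) :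
    t ∈ Submodule.colon J (Ideal.span {w}) ↔ t * w ∈ J :=
  Ideal.mem_colon_span_singleton

lemma assoc_iff_colon13 (J p : Ideal S) :
    IsAssociatedPrime p (S ⧸ J) ↔
      p.IsPrime ∧ ∃ w : S, (Submodule.colon J (Ideal.span {w})).radical = p := by
  constructor
  · rintro ⟨hp, x, hx⟩
    obtain ⟨w, rfl⟩ := Ideal.Quotient.mk_surjective x
    refine ⟨hp, w, ?_⟩
    rw [hx]; congr 1
    ext t
    rw [colon_mem_iff13, Submodule.mem_colon_singleton, Submodule.mem_bot]
    simp [Algebra.smul_def, Ideal.Quotient.algebraMap_eq, ← map_mul,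
      Ideal.Quotient.eq_zero_iff_mem]
  · rintro ⟨hp, w, hw⟩
    refine ⟨hp, Ideal.Quotient.mk J w, ?_⟩
    rw [← hw]; congr 1
    ext t
    rw [Submodule.mem_colon_singleton, Submodule.mem_bot, colon_mem_iff13]
    simp [Algebra.smul_def, Ideal.Quotient.algebraMap_eq, ← map_mul,
      Ideal.Quotient.eq_zero_iff_mem]

end Aux13

section Main13
variable {k : Type*} [Field k] {σ : Type*}

/-- Herzog–Popescu: a pretty clean filtration has support `Ass(S/I)`. -/
lemma prettyClean_supp_eq_ass (I : Ideal (MvPolynomial σ k))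
    (F : PrimeFiltration k I) (hF : F.IsPrettyClean) :
    F.supp = associatedPrimes (MvPolynomial σ k) (MvPolynomial σ k ⧸ I) := by
  set S := MvPolynomial σ k
  -- supp ⊆ Ass: downward propagation of colon witnesses
  have key1 : ∀ i, i < F.len → ∀ d j, j + d = i →
      ∃ w : S, Submodule.colon (F.c j) (Ideal.span {w}) = F.p (i + 1) := by
    intro i hi d
    induction d with
    | zero =>
      intro j hj
      have hji : j = i := by omega
      obtain ⟨v, _, hcol⟩ := F.cyclic i hi
      exact ⟨v, by rw [hji]; exact hcol⟩
    | succ d ih =>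
      intro j hj
      obtain ⟨w, hw⟩ := ih (j + 1) (by omega)
      obtain ⟨v, hcv, hcolv⟩ := F.cyclic j (by omega)
      by_cases hqp : F.p (j + 1) = F.p (i + 1)
      · exact ⟨v, by rw [hcolv, hqp]⟩
      · have hnsub : ¬ F.p (j + 1) ≤ F.p (i + 1) := fun h =>
          hqp (hF (j + 1) (i + 1) (by omega) (by omega) (by omega) h)
        obtain ⟨s, hs_mem, hs_not⟩ := SetLike.not_le_iff_exists.mp hnsub
        have hprime := F.prime i hi
        refine ⟨s * w, ?_⟩
        ext t
        rw [colon_mem_iff13]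
        constructor
        · intro ht
          have h1 : (t * s) * w ∈ F.c (j + 1) := by
            rw [hcv]
            refine Submodule.mem_sup_left ?_
            rw [mul_assoc]
            exact ht
          have h2 : t * s ∈ F.p (i + 1) := by
            rw [← hw]; rwa [colon_mem_iff13]
          exact (hprime.mem_or_mem h2).resolve_right hs_not
        · intro ht
          have htw : t * w ∈ F.c (j + 1) := by
            rw [← colon_mem_iff13 (F.c (j+1)) w t, hw]; exact ht
          rw [hcv] at htw
          obtain ⟨a, ha, b, hb, hab⟩ := Submodule.mem_sup.mp htw
          obtain ⟨r, hr⟩ := Ideal.mem_span_singleton'.mp hb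
          have hsv : s * v ∈ F.c j := by
            rw [← colon_mem_iff13 (F.c j) v s, hcolv]; exact hs_mem
          have : t * (s * w) = s * a + r * (s * v) := by
            rw [← hr] at hab
            have : t * w = a + r * v := hab.symm
            calc t * (s * w) = s * (t * w) := by ring
              _ = s * (a + r * v) := by rw [this]
              _ = s * a + r * (s * v) := by ring
          rw [this]
          exact Ideal.add_mem _ (Ideal.mul_mem_left _ _ ha) (Ideal.mul_mem_left _ _ hsv)
  -- Ass ⊆ supp: upward propagation
  have key2 : ∀ d j, j + d = F.len → ∀ p : Ideal S, p.IsPrime →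
      (∃ w : S, (Submodule.colon (F.c j) (Ideal.span {w})).radical = p) →
      ∃ i, i < F.len ∧ p = F.p (i + 1) := by
    intro d
    induction d with
    | zero =>
      intro j hj p hp ⟨w, hw⟩
      have : j = F.len := by omega
      subst this
      exfalso
      have htop : Submodule.colon (F.c F.len) (Ideal.span {w}) = ⊤ := by
        rw [Ideal.eq_top_iff_one, colon_mem_iff13, F.last]
        exact Submodule.mem_top
      rw [htop, Ideal.radical_top] at hw
      exact hp.ne_top hw.symm
    | succ d ih =>
      rintro j hj p hp ⟨w, hw⟩
      have hjlen : j < F.len := by omega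
      obtain ⟨v, hcv, hcolv⟩ := F.cyclic j hjlen
      have hqprime := F.prime j hjlen
      by_cases hrad : (Submodule.colon (F.c (j + 1)) (Ideal.span {w})).radical = p
      · exact ih (j + 1) (by omega) p hp ⟨w, hrad⟩
      · refine ⟨j, hjlen, ?_⟩
        have hle : p ≤ (Submodule.colon (F.c (j + 1)) (Ideal.span {w})).radical := by
          rw [← hw]
          apply Ideal.radical_mono
          intro t ht
          rw [colon_mem_iff13] at ht ⊢
          rw [hcv]
          exact Submodule.mem_sup_left ht
        obtain ⟨x, hx, hxp⟩ : ∃ x ∈ (Submodule.colon (F.c (j + 1)) (Ideal.span {w})).radical,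
            x ∉ p := by
          by_contra! h
          exact hrad (le_antisymm h hle)
        obtain ⟨n, hn⟩ := Ideal.mem_radical_iff.mp hx
        rw [colon_mem_iff13, hcv] at hn
        obtain ⟨a, ha, b, hb, hab⟩ := Submodule.mem_sup.mp hn
        obtain ⟨r, hr⟩ := Ideal.mem_span_singleton'.mp hb
        have hxw : x ^ n * w = a + r * v := by rw [← hr] at hab; exact hab.symm
        have hxn : x ^ n ∉ p := fun h => hxp (hp.mem_of_pow_mem n h)
        have hcolp : ∀ y, y * w ∈ F.c j → y ∈ p := by
          intro y hy
          rw [← hw]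
          exact Ideal.le_radical (by rw [colon_mem_iff13]; exact hy)
        have hrq : r ∉ F.p (j + 1) := by
          intro h
          have hrv : r * v ∈ F.c j := by
            rw [← colon_mem_iff13 (F.c j) v r, hcolv]; exact h
          apply hxn
          apply hcolp
          rw [hxw]
          exact Ideal.add_mem _ ha hrv
        apply le_antisymm
        · intro t ht
          rw [← hw] at ht
          obtain ⟨m, hm⟩ := Ideal.mem_radical_iff.mp ht
          rw [colon_mem_iff13] at hm
          have h1 : t ^ m * (r * v) ∈ F.c j := by
            have h2 : t ^ m * (x ^ n * w) ∈ F.c j := by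
              have : t ^ m * (x ^ n * w) = x ^ n * (t ^ m * w) := by ring
              rw [this]; exact Ideal.mul_mem_left _ _ hm
            rw [hxw] at h2
            have : t ^ m * (a + r * v) = t ^ m * a + t ^ m * (r * v) := by ring
            rw [this] at h2
            have h3 : t ^ m * a ∈ F.c j := Ideal.mul_mem_left _ _ ha
            have := Ideal.sub_mem _ h2 h3
            simpa using this
          have h5 : t ^ m * r ∈ F.p (j + 1) := by
            rw [← hcolv, colon_mem_iff13, mul_assoc]
            exact h1
          exact hqprime.mem_of_pow_mem m ((hqprime.mem_or_mem h5).resolve_right hrq)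
        · intro t ht
          have h1 : t * v ∈ F.c j := by
            rw [← colon_mem_iff13 (F.c j) v t, hcolv]; exact ht
          have h2 : t * (x ^ n * w) ∈ F.c j := by
            rw [hxw]
            have : t * (a + r * v) = t * a + r * (t * v) := by ring
            rw [this]
            exact Ideal.add_mem _ (Ideal.mul_mem_left _ _ ha) (Ideal.mul_mem_left _ _ h1)
          have h4 : t * x ^ n ∈ p := hcolp _ (by rw [mul_assoc]; exact h2)
          exact (hp.mem_or_mem h4).resolve_right hxn
  ext q
  constructor
  · rintro ⟨i, hi, rfl⟩
    rw [AssociatedPrimes.mem_iff, assoc_iff_colon13]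
    refine ⟨F.prime i hi, ?_⟩
    obtain ⟨w, hw⟩ := key1 i hi i 0 (by omega)
    rw [F.first] at hw
    exact ⟨w, by rw [hw]; exact (F.prime i hi).radical⟩
  · intro hq
    rw [AssociatedPrimes.mem_iff, assoc_iff_colon13] at hq
    obtain ⟨hqp, w, hw⟩ := hq
    rw [← F.first] at hw
    obtain ⟨i, hi, hpi⟩ := key2 F.len 0 (by omega) q hqp ⟨w, hw⟩
    exact ⟨i, hi, hpi⟩

end Main13

/-- A pretty clean filtration has support equal to `Ass(S/I)`; in
particular, if `Ass(S/I^m) = Min(I^m)` and every prime filtration of `S/I^m` has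
primes that are not all minimal, then `S/I^m` is not pretty clean. -/
theorem statement13 (k : Type*) [Field k] {σ : Type*} (I : Ideal (MvPolynomial σ k))
    (hmono : IsMonomialIdeal k I) :
    (∀ F : PrimeFiltration k I, F.IsPrettyClean →
      F.supp = associatedPrimes (MvPolynomial σ k) (MvPolynomial σ k ⧸ I)) ∧
    (∀ m : ℕ,
      associatedPrimes (MvPolynomial σ k) (MvPolynomial σ k ⧸ I ^ m) =
        (I ^ m).minimalPrimes →
      (∀ F : PrimeFiltration k (I ^ m), ¬ F.supp ⊆ (I ^ m).minimalPrimes) →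
      ¬ IsPrettyCleanIdeal k (I ^ m)) := by
  refine ⟨fun F hF => prettyClean_supp_eq_ass I F hF, ?_⟩
  rintro m hass hnot ⟨F, hF⟩
  exact hnot F (by rw [prettyClean_supp_eq_ass _ F hF, hass])
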